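/- Tail bound on the overlap of two random subsets (hypergeometric tail). Let s' and p' be positive integers with p' ≥ 2s'. Then Σ_{t : t integer, s'/2 ≤ t ≤ s'} C(s',t) · C(p'−s', s'−t) ≤ (1/2) · (4s'/(p'−s'+1))^{s'/2} · C(p',s'), where C(n,k) denotes the binomial coefficient n choose k. Equivalently, if Ω' is a uniformly random s'-element subset of {1,…,p'} and Ω is a fixed s'-element subset, then P(|Ω ∩ Ω'| ≥ s'/2) ≤ (1/2)(4s'/(p'−s'+1))^{s'/2}. -/

import Mathlib

open BigOperators

noncomputable section

namespace HGTail

open Finset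

lemma descFactorial_prod (n k : ℕ) :
    n.descFactorial k = ∏ i ∈ Finset.range k, (n - i) := by
  induction k with
  | zero => simp
  | succ k ih => rw [Nat.descFactorial_succ, Finset.prod_range_succ, ih, mul_comm]

/-- core product inequality: `(q)_{s-t} (q+1)^t ≤ (q+s)_s`. -/
lemma core1 (q s t : ℕ) (ht : t ≤ s) (hsq : s ≤ q) :
    q.descFactorial (s - t) * (q + 1) ^ t ≤ (q + s).descFactorial s := by
  rw [descFactorial_prod, descFactorial_prod]
  have hsplit : (∏ i ∈ Finset.range t, (q + s - i)) * ∏ i ∈ Finset.Ico t s, (q + s - i)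
      = ∏ i ∈ Finset.range s, (q + s - i) := Finset.prod_range_mul_prod_Ico _ ht
  rw [← hsplit, mul_comm]
  apply Nat.mul_le_mul
  · calc ((q + 1) : ℕ) ^ t = ∏ _i ∈ Finset.range t, (q + 1) := by
          rw [Finset.prod_const, Finset.card_range]
      _ ≤ ∏ i ∈ Finset.range t, (q + s - i) := by
          apply Finset.prod_le_prod'
          intro i hi
          have hi' : i < t := Finset.mem_range.mp hi
          omega
  · rw [Finset.prod_Ico_eq_prod_range]
    apply Finset.prod_le_prod'
    intro j hj
    have hj' : j < s - t := Finset.mem_range.mp hj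
    omega

/-- per-term bound: `C(q, s-t) (q+1)^t ≤ s^t C(q+s, s)`. -/
lemma N1 (q s t : ℕ) (ht : t ≤ s) (hsq : s ≤ q) :
    q.choose (s - t) * (q + 1) ^ t ≤ s ^ t * (q + s).choose s := by
  have h := core1 q s t ht hsq
  rw [Nat.descFactorial_eq_factorial_mul_choose, Nat.descFactorial_eq_factorial_mul_choose] at h
  -- h : (s-t)! * C(q, s-t) * (q+1)^t ≤ s! * C(q+s, s)
  have hfac : s.factorial = s.descFactorial t * (s - t).factorial := by
    rw [mul_comm, Nat.factorial_mul_descFactorial ht]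
  rw [hfac] at h
  have h2 : (s - t).factorial * (q.choose (s - t) * (q + 1) ^ t)
      ≤ (s - t).factorial * (s.descFactorial t * (q + s).choose s) := by
    calc (s - t).factorial * (q.choose (s - t) * (q + 1) ^ t)
        = (s - t).factorial * q.choose (s - t) * (q + 1) ^ t := by ring
      _ ≤ s.descFactorial t * (s - t).factorial * (q + s).choose s := h
      _ = (s - t).factorial * (s.descFactorial t * (q + s).choose s) := by ring
  have h3 := Nat.le_of_mul_le_mul_left h2 (Nat.factorial_pos _)
  exact h3.trans (Nat.mul_le_mul_right _ (Nat.descFactorial_le_pow _ _))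

/-- real per-term bound: `C(q, s-t) ≤ (s/(q+1))^t C(q+s, s)`. -/
lemma R1 (q s t : ℕ) (ht : t ≤ s) (hsq : s ≤ q) :
    (q.choose (s - t) : ℝ) ≤ ((s : ℝ) / ((q : ℝ) + 1)) ^ t * ((q + s).choose s : ℝ) := by
  have h := N1 q s t ht hsq
  have hc : (q.choose (s - t) : ℝ) * ((q : ℝ) + 1) ^ t
      ≤ (s : ℝ) ^ t * ((q + s).choose s : ℝ) := by exact_mod_cast h
  have hq1 : (0 : ℝ) < ((q : ℝ) + 1) ^ t := by positivity
  rw [div_pow]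
  rw [div_mul_eq_mul_div, le_div_iff₀ hq1]
  calc (q.choose (s - t) : ℝ) * ((q : ℝ) + 1) ^ t
      ≤ (s : ℝ) ^ t * ((q + s).choose s : ℝ) := hc
    _ = (s : ℝ) ^ t * ((q + s).choose s : ℝ) := rfl

lemma term3 (m q i : ℕ) (hi : i < m) (hq : 2 * m ≤ q) :
    (2 * m - i) * ((q - i) * (q + 2 * m)) ≤ 2 * m * (q * (q + 2 * m - i)) := by
  have h1 : i ≤ 2 * m := by omega
  have h2 : i ≤ q := by omega
  have h3 : i ≤ q + 2 * m := by omega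
  zify [h1, h2, h3]
  have key : (0 : ℤ) ≤ (i : ℤ) * ((2 * (m : ℤ) + q) * (2 * m + q - i) - 2 * m * q) := by
    apply mul_nonneg
    · positivity
    · have e1 : (2 * (m : ℤ) + q) * (2 * m + q - i) ≥ (2 * (m : ℤ) + q) * (2 * m) := by
        apply mul_le_mul_of_nonneg_left
        · have : (i : ℤ) ≤ (q : ℤ) := by exact_mod_cast h2
          linarith
        · positivity
      nlinarith [sq_nonneg ((m : ℤ)), Int.natCast_nonneg q, Int.natCast_nonneg m]
  nlinarith [key]

/-- core product inequality for the middle term (even case). -/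
lemma core2 (q m : ℕ) (hq : 2 * m ≤ q) :
    q.descFactorial m * (2 * m).descFactorial m * ((q + 1) ^ m * (q + 2 * m) ^ m)
      ≤ (2 * m) ^ m * q ^ m * (q + 2 * m).descFactorial (2 * m) := by
  rw [descFactorial_prod, descFactorial_prod, descFactorial_prod]
  have hsplit : (∏ i ∈ Finset.range m, (q + 2 * m - i)) * ∏ i ∈ Finset.Ico m (2 * m), (q + 2 * m - i)
      = ∏ i ∈ Finset.range (2 * m), (q + 2 * m - i) :=
    Finset.prod_range_mul_prod_Ico _ (by omega)
  rw [← hsplit]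
  have e1 : (2 * m) ^ m * q ^ m * ((∏ i ∈ Finset.range m, (q + 2 * m - i)) *
      ∏ i ∈ Finset.Ico m (2 * m), (q + 2 * m - i))
      = (∏ i ∈ Finset.range m, (2 * m * (q * (q + 2 * m - i)))) *
        ∏ i ∈ Finset.Ico m (2 * m), (q + 2 * m - i) := by
    simp only [Finset.prod_mul_distrib, Finset.prod_const, Finset.card_range]
    ring
  rw [e1]
  have e2 : (∏ i ∈ Finset.range m, (q - i)) * (∏ i ∈ Finset.range m, (2 * m - i)) *
      ((q + 1) ^ m * (q + 2 * m) ^ m)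
      = (∏ i ∈ Finset.range m, ((2 * m - i) * ((q - i) * (q + 2 * m)))) *
        ∏ _i ∈ Finset.range m, (q + 1) := by
    simp only [Finset.prod_mul_distrib, Finset.prod_const, Finset.card_range]
    ring
  rw [e2]
  apply Nat.mul_le_mul
  · apply Finset.prod_le_prod'
    intro i hi
    exact term3 m q i (Finset.mem_range.mp hi) hq
  · rw [Finset.prod_Ico_eq_prod_range, show 2 * m - m = m from by omega]
    apply Finset.prod_le_prod'
    intro j hj
    have : j < m := Finset.mem_range.mp hj
    omega

/-- middle-term bound (even case), choose version. -/
lemma L2 (q m : ℕ) (hq : 2 * m ≤ q) :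
    q.choose m * ((q + 1) ^ m * (q + 2 * m) ^ m)
      ≤ (2 * m) ^ m * q ^ m * (q + 2 * m).choose (2 * m) := by
  have h := core2 q m hq
  rw [Nat.descFactorial_eq_factorial_mul_choose, Nat.descFactorial_eq_factorial_mul_choose,
    Nat.descFactorial_eq_factorial_mul_choose] at h
  have hfac : (2 * m).factorial = (2 * m).choose m * m.factorial * m.factorial := by
    have := Nat.choose_mul_factorial_mul_factorial (show m ≤ 2 * m by omega)
    rw [show 2 * m - m = m by omega] at this
    omega
  rw [hfac] at h
  set K := m.factorial * m.factorial * (2 * m).choose m with hK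
  have hKpos : 0 < K := by
    refine Nat.mul_pos (Nat.mul_pos (Nat.factorial_pos _) (Nat.factorial_pos _)) (Nat.choose_pos (by omega))
  have h2 : K * (q.choose m * ((q + 1) ^ m * (q + 2 * m) ^ m))
      ≤ K * ((2 * m) ^ m * q ^ m * (q + 2 * m).choose (2 * m)) := by
    calc K * (q.choose m * ((q + 1) ^ m * (q + 2 * m) ^ m))
        = m.factorial * q.choose m * (m.factorial * ((2 * m).choose m)) *
          ((q + 1) ^ m * (q + 2 * m) ^ m) := by rw [hK]; ring
      _ ≤ (2 * m) ^ m * q ^ m * ((2 * m).choose m * m.factorial * m.factorial *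
          (q + 2 * m).choose (2 * m)) := h
      _ = K * ((2 * m) ^ m * q ^ m * (q + 2 * m).choose (2 * m)) := by rw [hK]; ring
  exact Nat.le_of_mul_le_mul_left h2 hKpos

/-- real middle-term bound. -/
lemma R2 (q m : ℕ) (hq : 2 * m ≤ q) (hm : 1 ≤ m) :
    (q.choose m : ℝ) ≤ ((2 * m : ℝ) / ((q : ℝ) + 1)) ^ m * ((q : ℝ) / ((q : ℝ) + 2 * m)) ^ m *
      ((q + 2 * m).choose (2 * m) : ℝ) := by
  have h := L2 q m hq
  have hc : (q.choose m : ℝ) * (((q : ℝ) + 1) ^ m * ((q : ℝ) + 2 * m) ^ m)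
      ≤ (2 * m : ℝ) ^ m * (q : ℝ) ^ m * ((q + 2 * m).choose (2 * m) : ℝ) := by
    exact_mod_cast h
  have hmR : (0 : ℝ) < (m : ℝ) := by exact_mod_cast hm
  have hq2m : (0 : ℝ) < (q : ℝ) + 2 * m := by
    have : (0 : ℝ) ≤ (q : ℝ) := Nat.cast_nonneg q
    linarith
  rw [div_pow, div_pow]
  have hq1 : (0 : ℝ) < ((q : ℝ) + 1) ^ m := by positivity
  have hq2 : (0 : ℝ) < ((q : ℝ) + 2 * m) ^ m := pow_pos hq2m m
  rw [div_mul_div_comm, div_mul_eq_mul_div, le_div_iff₀ (mul_pos hq1 hq2)]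
  calc (q.choose m : ℝ) * (((q : ℝ) + 1) ^ m * ((q : ℝ) + 2 * m) ^ m)
      ≤ (2 * m : ℝ) ^ m * (q : ℝ) ^ m * ((q + 2 * m).choose (2 * m) : ℝ) := hc
    _ = (2 * m : ℝ) ^ m * (q : ℝ) ^ m * ((q + 2 * m).choose (2 * m) : ℝ) := rfl

/-- Bernoulli-type estimate: `(q/(q+2m))^m ≤ (q+1-m)/(q+1)`. -/
lemma R3 (q m : ℕ) (hq : 2 * m ≤ q) (hm : 1 ≤ m) :
    ((q : ℝ) / ((q : ℝ) + 2 * m)) ^ m ≤ ((q : ℝ) + 1 - m) / ((q : ℝ) + 1) := by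
  set Q : ℝ := (q : ℝ) with hQdef
  have hQ : 2 * (m : ℝ) ≤ Q := by
    rw [hQdef]
    exact_mod_cast hq
  have hm' : (1 : ℝ) ≤ (m : ℝ) := by exact_mod_cast hm
  have hQ0 : (0 : ℝ) < Q := by nlinarith
  have step1 : (Q / (Q + 2 * m)) ^ m ≤ Q / (Q + 2 * m ^ 2) := by
    have hb : (1 : ℝ) + m * (2 * m / Q) ≤ (1 + 2 * m / Q) ^ m := by
      apply one_add_mul_le_pow
      have : (0 : ℝ) ≤ 2 * m / Q := by positivity
      linarith
    have he : Q / (Q + 2 * m) = 1 / (1 + 2 * m / Q) := by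
      rw [one_div, ← div_div_eq_mul_div]
      field_simp
    have he2 : (1 : ℝ) + m * (2 * m / Q) = (Q + 2 * m ^ 2) / Q := by
      field_simp
    rw [he, div_pow, one_pow]
    have hpow : (0 : ℝ) < (1 + 2 * m / Q) ^ m := by positivity
    have h1 : (Q + 2 * m ^ 2) / Q ≤ (1 + 2 * m / Q) ^ m := by rw [← he2]; exact hb
    have h2 : (0 : ℝ) < (Q + 2 * m ^ 2) / Q := by positivity
    calc (1 : ℝ) / (1 + 2 * m / Q) ^ m ≤ 1 / ((Q + 2 * m ^ 2) / Q) :=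
          one_div_le_one_div_of_le h2 h1
      _ = Q / (Q + 2 * m ^ 2) := by rw [one_div_div]
  have step2 : Q / (Q + 2 * m ^ 2) ≤ (Q + 1 - m) / (Q + 1) := by
    rw [div_le_div_iff₀ (by positivity) (by positivity)]
    nlinarith [hQ, hm', sq_nonneg ((m : ℝ) - 1)]
  exact step1.trans step2

lemma L4 (m : ℕ) (hm : 1 ≤ m) : 2 * (2 * m).choose m ≤ 4 ^ m := by
  obtain ⟨k, rfl⟩ : ∃ k, m = k + 1 := ⟨m - 1, by omega⟩
  have h1 : (2 * (k + 1)).choose (k + 1) = (2 * k + 1).choose k + (2 * k + 1).choose (k + 1) := by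
    rw [show 2 * (k + 1) = (2 * k + 1) + 1 by ring]
    rw [Nat.choose_succ_succ']
  have h2 : (2 * k + 1).choose (k + 1) = (2 * k + 1).choose k := by
    rw [← Nat.choose_symm (show k + 1 ≤ 2 * k + 1 by omega)]
    congr 1
    omega
  have h3 : (2 * k + 1).choose k ≤ 4 ^ k := Nat.choose_middle_le_pow k
  calc 2 * (2 * (k + 1)).choose (k + 1) = 2 * ((2 * k + 1).choose k + (2 * k + 1).choose (k + 1)) := by
        rw [h1]
    _ = 4 * (2 * k + 1).choose k := by rw [h2]; ring
    _ ≤ 4 * 4 ^ k := by omega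
    _ = 4 ^ (k + 1) := by ring

lemma reflect_even (m : ℕ) :
    ∑ t ∈ Finset.Ico (m + 1) (2 * m + 1), (2 * m).choose t
      = ∑ t ∈ Finset.range m, (2 * m).choose t := by
  apply Finset.sum_nbij' (fun t => 2 * m - t) (fun t => 2 * m - t)
  · intro a ha
    rw [Finset.mem_Ico] at ha
    rw [Finset.mem_range]
    omega
  · intro a ha
    rw [Finset.mem_range] at ha
    rw [Finset.mem_Ico]
    omega
  · intro a ha
    rw [Finset.mem_Ico] at ha
    omega
  · intro a ha
    rw [Finset.mem_range] at ha
    omega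
  · intro a ha
    rw [Finset.mem_Ico] at ha
    rw [Nat.choose_symm (by omega)]

lemma L3even (m : ℕ) :
    2 * (∑ t ∈ Finset.Ico (m + 1) (2 * m + 1), (2 * m).choose t) + (2 * m).choose m = 4 ^ m := by
  have htot : ∑ t ∈ Finset.range (2 * m + 1), (2 * m).choose t = 2 ^ (2 * m) :=
    Nat.sum_range_choose (2 * m)
  have hsp : (∑ t ∈ Finset.range (m + 1), (2 * m).choose t) +
      ∑ t ∈ Finset.Ico (m + 1) (2 * m + 1), (2 * m).choose t
      = ∑ t ∈ Finset.range (2 * m + 1), (2 * m).choose t := by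
    rw [Finset.range_eq_Ico, Finset.range_eq_Ico]
    exact Finset.sum_Ico_consecutive _ (by omega) (by omega)
  have hsp2 : ∑ t ∈ Finset.range (m + 1), (2 * m).choose t
      = (∑ t ∈ Finset.range m, (2 * m).choose t) + (2 * m).choose m :=
    Finset.sum_range_succ _ m
  have href := reflect_even m
  have hpow : 2 ^ (2 * m) = 4 ^ m := by rw [pow_mul]; norm_num
  omega

lemma L3odd (m : ℕ) :
    ∑ t ∈ Finset.Ico (m + 1) (2 * m + 2), (2 * m + 1).choose t = 4 ^ m := by
  have htot : ∑ t ∈ Finset.range (2 * m + 2), (2 * m + 1).choose t = 2 ^ (2 * m + 1) :=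
    Nat.sum_range_choose (2 * m + 1)
  have hhalf : ∑ t ∈ Finset.range (m + 1), (2 * m + 1).choose t = 4 ^ m :=
    Nat.sum_range_choose_halfway m
  have hsp : (∑ t ∈ Finset.range (m + 1), (2 * m + 1).choose t) +
      ∑ t ∈ Finset.Ico (m + 1) (2 * m + 2), (2 * m + 1).choose t
      = ∑ t ∈ Finset.range (2 * m + 2), (2 * m + 1).choose t := by
    rw [Finset.range_eq_Ico, Finset.range_eq_Ico]
    exact Finset.sum_Ico_consecutive _ (by omega) (by omega)
  have hpow : 2 ^ (2 * m + 1) = 2 * 4 ^ m := by rw [pow_succ, pow_mul]; ring_nf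
  omega

/-- Vandermonde in range form, real. -/
lemma vandermonde_real (s q : ℕ) :
    ∑ t ∈ Finset.range (s + 1), ((s.choose t : ℝ) * (q.choose (s - t) : ℝ))
      = ((q + s).choose s : ℝ) := by
  have h : (s + q).choose s = ∑ t ∈ Finset.range (s + 1), s.choose t * q.choose (s - t) := by
    rw [Nat.add_choose_eq]
    rw [Finset.Nat.sum_antidiagonal_eq_sum_range_succ_mk]
  rw [show q + s = s + q by ring, h]
  push_cast
  rfl


/-- The odd case of the main theorem. -/
lemma odd_case (q m : ℕ) (hsq : 2 * m + 1 ≤ q) :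
    ∑ t ∈ (Finset.range (2 * m + 1 + 1)).filter (fun t => 2 * m + 1 ≤ 2 * t),
        (((2 * m + 1).choose t : ℝ) * (q.choose (2 * m + 1 - t) : ℝ)) ≤
      (1 / 2) * ((4 * ((2 * m + 1 : ℕ) : ℝ)) / ((q : ℝ) + 1)) ^ (((2 * m + 1 : ℕ) : ℝ) / 2) *
        ((q + (2 * m + 1)).choose (2 * m + 1) : ℝ) := by
  have hq1 : (0 : ℝ) < (q : ℝ) + 1 := by positivity
  set x : ℝ := ((2 * m + 1 : ℕ) : ℝ) / ((q : ℝ) + 1) with hxdef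
  set C : ℝ := ((q + (2 * m + 1)).choose (2 * m + 1) : ℝ) with hCdef
  have hC0 : (0 : ℝ) ≤ C := Nat.cast_nonneg _
  have hsR : ((2 * m + 1 : ℕ) : ℝ) ≤ (q : ℝ) := by exact_mod_cast hsq
  have hsR0 : (0 : ℝ) < ((2 * m + 1 : ℕ) : ℝ) := by positivity
  have hx0 : 0 < x := by rw [hxdef]; exact div_pos hsR0 hq1
  have hx1 : x < 1 := by
    rw [hxdef, div_lt_one hq1]
    linarith
  set y : ℝ := ((2 * m + 1 : ℕ) : ℝ) / 2 with hydef
  have hset : (Finset.range (2 * m + 1 + 1)).filter (fun t => 2 * m + 1 ≤ 2 * t)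
      = Finset.Ico (m + 1) (2 * m + 2) := by
    ext t
    simp only [Finset.mem_filter, Finset.mem_range, Finset.mem_Ico]
    omega
  rw [hset]
  have htail : ∑ t ∈ Finset.Ico (m + 1) (2 * m + 2),
        (((2 * m + 1).choose t : ℝ) * (q.choose (2 * m + 1 - t) : ℝ))
      ≤ (∑ t ∈ Finset.Ico (m + 1) (2 * m + 2), ((2 * m + 1).choose t : ℝ)) * (x ^ (m + 1) * C) := by
    rw [Finset.sum_mul]
    apply Finset.sum_le_sum
    intro t ht
    rw [Finset.mem_Ico] at ht
    have h1 : (q.choose (2 * m + 1 - t) : ℝ) ≤ x ^ t * C :=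
      R1 q (2 * m + 1) t (by omega) hsq
    have h2 : x ^ t ≤ x ^ (m + 1) := pow_le_pow_of_le_one hx0.le hx1.le (by omega)
    calc ((2 * m + 1).choose t : ℝ) * (q.choose (2 * m + 1 - t) : ℝ)
        ≤ ((2 * m + 1).choose t : ℝ) * (x ^ t * C) :=
          mul_le_mul_of_nonneg_left h1 (Nat.cast_nonneg _)
      _ ≤ ((2 * m + 1).choose t : ℝ) * (x ^ (m + 1) * C) := by
          apply mul_le_mul_of_nonneg_left _ (Nat.cast_nonneg _)
          exact mul_le_mul_of_nonneg_right h2 hC0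
  have hsum : (∑ t ∈ Finset.Ico (m + 1) (2 * m + 2), ((2 * m + 1).choose t : ℝ)) = 4 ^ m := by
    exact_mod_cast congrArg (Nat.cast : ℕ → ℝ) (L3odd m)
  rw [hsum] at htail
  -- now handle the rpow on the right
  have hxmy : x ^ (m + 1) ≤ x ^ y := by
    rw [show x ^ (m + 1) = x ^ (((m + 1 : ℕ) : ℝ)) from (Real.rpow_natCast x (m + 1)).symm]
    apply Real.rpow_le_rpow_of_exponent_ge hx0 hx1.le
    rw [hydef]
    push_cast
    linarith
  have h4y : ((4 : ℝ)) ^ y = (2 : ℝ) ^ (2 * m + 1) := by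
    rw [show (4 : ℝ) = (2 : ℝ) ^ ((2 : ℕ) : ℝ) from by rw [Real.rpow_natCast]; norm_num]
    rw [← Real.rpow_mul (by norm_num : (0 : ℝ) ≤ 2)]
    rw [show ((2 : ℕ) : ℝ) * y = ((2 * m + 1 : ℕ) : ℝ) from by rw [hydef]; push_cast; ring]
    rw [Real.rpow_natCast]
  have hbase : (4 * ((2 * m + 1 : ℕ) : ℝ)) / ((q : ℝ) + 1) = 4 * x := by
    rw [hxdef]; ring
  rw [hbase]
  have hRHS : (1 / 2 : ℝ) * (4 * x) ^ y * C = 4 ^ m * (x ^ y * C) := by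
    rw [Real.mul_rpow (by norm_num : (0 : ℝ) ≤ 4) hx0.le, h4y]
    have h2p : (2 : ℝ) ^ (2 * m + 1) = 2 * 4 ^ m := by
      rw [pow_succ, pow_mul]
      norm_num
      ring
    rw [h2p]
    ring
  rw [hRHS]
  calc ∑ t ∈ Finset.Ico (m + 1) (2 * m + 2),
        (((2 * m + 1).choose t : ℝ) * (q.choose (2 * m + 1 - t) : ℝ))
      ≤ 4 ^ m * (x ^ (m + 1) * C) := htail
    _ ≤ 4 ^ m * (x ^ y * C) := by
        apply mul_le_mul_of_nonneg_left _ (by positivity)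
        exact mul_le_mul_of_nonneg_right hxmy hC0

/-- The even case of the main theorem. -/
lemma even_case (q m : ℕ) (hm : 1 ≤ m) (hsq : 2 * m ≤ q) :
    ∑ t ∈ (Finset.range (2 * m + 1)).filter (fun t => 2 * m ≤ 2 * t),
        (((2 * m).choose t : ℝ) * (q.choose (2 * m - t) : ℝ)) ≤
      (1 / 2) * ((4 * ((2 * m : ℕ) : ℝ)) / ((q : ℝ) + 1)) ^ (((2 * m : ℕ) : ℝ) / 2) *
        ((q + 2 * m).choose (2 * m) : ℝ) := by
  have hq1 : (0 : ℝ) < (q : ℝ) + 1 := by positivity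
  set x : ℝ := ((2 * m : ℕ) : ℝ) / ((q : ℝ) + 1) with hxdef
  set C : ℝ := ((q + 2 * m).choose (2 * m) : ℝ) with hCdef
  have hC0 : (0 : ℝ) ≤ C := Nat.cast_nonneg _
  have hmR : (0 : ℝ) < (m : ℝ) := by exact_mod_cast hm
  have hsR : ((2 * m : ℕ) : ℝ) ≤ (q : ℝ) := by exact_mod_cast hsq
  have hsR0 : (0 : ℝ) < ((2 * m : ℕ) : ℝ) := by push_cast; linarith
  have hx0 : 0 < x := by rw [hxdef]; exact div_pos hsR0 hq1
  have hx1 : x < 1 := by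
    rw [hxdef, div_lt_one hq1]
    linarith
  -- rewrite the rpow into a natural power
  have hbase : (4 * ((2 * m : ℕ) : ℝ)) / ((q : ℝ) + 1) = 4 * x := by rw [hxdef]; ring
  have hexp : (((2 * m : ℕ) : ℝ) / 2) = ((m : ℕ) : ℝ) := by push_cast; ring
  have hrpow : ((4 * ((2 * m : ℕ) : ℝ)) / ((q : ℝ) + 1)) ^ ((((2 * m : ℕ)) : ℝ) / 2)
      = (4 * x) ^ m := by
    rw [hbase, hexp, Real.rpow_natCast]
  rw [hrpow]
  by_cases hA : (1 : ℝ) ≤ 1 / 2 * (4 * x) ^ m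
  · -- trivial case: the whole Vandermonde sum works
    have hV := vandermonde_real (2 * m) q
    have hLE : ∑ t ∈ (Finset.range (2 * m + 1)).filter (fun t => 2 * m ≤ 2 * t),
        (((2 * m).choose t : ℝ) * (q.choose (2 * m - t) : ℝ)) ≤ C := by
      rw [hCdef, ← hV]
      apply Finset.sum_le_sum_of_subset_of_nonneg (Finset.filter_subset _ _)
      intro i _ _
      positivity
    calc ∑ t ∈ (Finset.range (2 * m + 1)).filter (fun t => 2 * m ≤ 2 * t),
        (((2 * m).choose t : ℝ) * (q.choose (2 * m - t) : ℝ)) ≤ C := hLE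
      _ = 1 * C := (one_mul C).symm
      _ ≤ 1 / 2 * (4 * x) ^ m * C := mul_le_mul_of_nonneg_right hA hC0
  · push_neg at hA
    have hxhalf : x < 1 / 2 := by
      by_contra hc
      push_neg at hc
      have h4x : (2 : ℝ) ≤ 4 * x := by linarith
      have h1 : (2 : ℝ) ^ m ≤ (4 * x) ^ m := pow_le_pow_left₀ (by norm_num) h4x m
      have h2m : (2 : ℝ) ≤ (2 : ℝ) ^ m := by
        calc (2 : ℝ) = 2 ^ 1 := (pow_one 2).symm
          _ ≤ 2 ^ m := pow_le_pow_right₀ (by norm_num) hm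
      linarith
    have hset : (Finset.range (2 * m + 1)).filter (fun t => 2 * m ≤ 2 * t)
        = insert m (Finset.Ico (m + 1) (2 * m + 1)) := by
      ext t
      simp only [Finset.mem_filter, Finset.mem_range, Finset.mem_insert, Finset.mem_Ico]
      omega
    rw [hset, Finset.sum_insert (by simp only [Finset.mem_Ico]; omega)]
    set K : ℝ := ((2 * m).choose m : ℝ) with hKdef
    set B : ℝ := ∑ t ∈ Finset.Ico (m + 1) (2 * m + 1), ((2 * m).choose t : ℝ) with hBdef
    have hK0 : (0 : ℝ) ≤ K := Nat.cast_nonneg _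
    have hB0 : (0 : ℝ) ≤ B := Finset.sum_nonneg fun i _ => Nat.cast_nonneg _
    have h2BK : 2 * B + K = (4 : ℝ) ^ m := by
      rw [hBdef, hKdef]
      exact_mod_cast congrArg (Nat.cast : ℕ → ℝ) (L3even m)
    have h2K : 2 * K ≤ (4 : ℝ) ^ m := by
      rw [hKdef]
      exact_mod_cast L4 m hm
    -- middle term
    have hmidfrac : ((q : ℝ) + 1 - (m : ℝ)) / ((q : ℝ) + 1) = 1 - x / 2 := by
      rw [hxdef]
      field_simp
      push_cast
      ring
    have hmid : (((2 * m).choose m : ℝ)) * (q.choose (2 * m - m) : ℝ)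
        ≤ K * (x ^ m * ((1 - x / 2) * C)) := by
      rw [show 2 * m - m = m from by omega, ← hKdef]
      apply mul_le_mul_of_nonneg_left _ hK0
      have hr2 := R2 q m hsq hm
      have hr3 := R3 q m hsq hm
      have hxeq : ((2 * m : ℝ)) / ((q : ℝ) + 1) = x := by rw [hxdef]; push_cast; ring
      rw [hxeq] at hr2
      calc (q.choose m : ℝ) ≤ x ^ m * ((q : ℝ) / ((q : ℝ) + 2 * m)) ^ m * C := hr2
        _ ≤ x ^ m * ((1 - x / 2) * C) := by
            rw [mul_assoc]
            apply mul_le_mul_of_nonneg_left _ (by positivity)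
            apply mul_le_mul_of_nonneg_right _ hC0
            rw [← hmidfrac]
            exact hr3
    -- tail
    have htail : ∑ t ∈ Finset.Ico (m + 1) (2 * m + 1),
          (((2 * m).choose t : ℝ) * (q.choose (2 * m - t) : ℝ))
        ≤ B * (x ^ (m + 1) * C) := by
      rw [hBdef, Finset.sum_mul]
      apply Finset.sum_le_sum
      intro t ht
      rw [Finset.mem_Ico] at ht
      have h1 : (q.choose (2 * m - t) : ℝ) ≤ x ^ t * C := R1 q (2 * m) t (by omega) hsq
      have h2 : x ^ t ≤ x ^ (m + 1) := pow_le_pow_of_le_one hx0.le hx1.le (by omega)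
      calc ((2 * m).choose t : ℝ) * (q.choose (2 * m - t) : ℝ)
          ≤ ((2 * m).choose t : ℝ) * (x ^ t * C) :=
            mul_le_mul_of_nonneg_left h1 (Nat.cast_nonneg _)
        _ ≤ ((2 * m).choose t : ℝ) * (x ^ (m + 1) * C) := by
            apply mul_le_mul_of_nonneg_left _ (Nat.cast_nonneg _)
            exact mul_le_mul_of_nonneg_right h2 hC0
    have hscalar : K * (1 - x / 2) + B * x ≤ 1 / 2 * 4 ^ m := by
      have hfac : (0 : ℝ) ≤ ((4 : ℝ) ^ m - 2 * K) * (1 - x) := by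
        apply mul_nonneg
        · linarith
        · linarith
      nlinarith [hfac, h2BK, hx0]
    calc K * (q.choose (2 * m - m) : ℝ) + ∑ t ∈ Finset.Ico (m + 1) (2 * m + 1),
          (((2 * m).choose t : ℝ) * (q.choose (2 * m - t) : ℝ))
        ≤ K * (x ^ m * ((1 - x / 2) * C)) + B * (x ^ (m + 1) * C) := by
          apply add_le_add _ htail
          exact hmid
      _ = (K * (1 - x / 2) + B * x) * (x ^ m * C) := by ring
      _ ≤ (1 / 2 * 4 ^ m) * (x ^ m * C) := by
          apply mul_le_mul_of_nonneg_right hscalar (by positivity)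
      _ = 1 / 2 * (4 * x) ^ m * C := by rw [mul_pow]; ring

end HGTail

/-- Tail bound on the overlap of two random subsets (hypergeometric tail):
`Σ_{s'/2 ≤ t ≤ s'} C(s',t) C(p'−s', s'−t) ≤ (1/2)(4s'/(p'−s'+1))^{s'/2} C(p',s')`. -/
theorem hypergeometric_overlap_tail_bound (s' p' : ℕ) (hs : 0 < s') (hp : 0 < p')
    (hps : 2 * s' ≤ p') :
    ∑ t ∈ (Finset.range (s' + 1)).filter (fun t => s' ≤ 2 * t),
        ((s'.choose t : ℝ) * ((p' - s').choose (s' - t) : ℝ)) ≤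
      (1 / 2) * ((4 * (s' : ℝ)) / ((p' : ℝ) - (s' : ℝ) + 1)) ^ ((s' : ℝ) / 2) *
        (p'.choose s' : ℝ) := by
  obtain ⟨q, rfl⟩ : ∃ q, p' = q + s' := ⟨p' - s', by omega⟩
  have hsq : s' ≤ q := by omega
  have hsub : q + s' - s' = q := by omega
  simp only [hsub]
  have hcast : ((q + s' : ℕ) : ℝ) - (s' : ℝ) + 1 = (q : ℝ) + 1 := by push_cast; ring
  rw [hcast]
  rcases Nat.even_or_odd s' with ⟨m, hm⟩ | ⟨m, hm⟩
  · have hm' : s' = 2 * m := by omega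
    subst hm'
    exact HGTail.even_case q m (by omega) (by omega)
  · subst hm
    exact HGTail.odd_case q m (by omega)

end
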